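/- Pretty-good measurement error relation: For all d×d complex positive semidefinite matrices A and B such that A + B is positive definite (invertible), Tr[ A·(A+B)^{−1/2}·B·(A+B)^{−1/2} ] ≤ (1/2)·Tr[A+B] − (1/2)·‖A − B‖₁, where (A+B)^{−1/2} is the inverse of the positive definite square root of A+B. -/

import Mathlib

open scoped ComplexOrder Classical

noncomputable section

namespace QHT

variable {ι : Type*} [Fintype ι] [DecidableEq ι]

/-- The positive semidefinite square root `U √D Uᴴ` of a positive semidefinite matrix
(the former Mathlib `Matrix.PosSemidef.sqrt`, spelled out). -/
def psdSqrt {A : Matrix ι ι ℂ} (hA : A.PosSemidef) : Matrix ι ι ℂ :=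
  (hA.1.eigenvectorUnitary : Matrix ι ι ℂ) *
    Matrix.diagonal (fun i => ((Real.sqrt (hA.1.eigenvalues i) : ℝ) : ℂ)) *
    (star (hA.1.eigenvectorUnitary : Matrix ι ι ℂ))

/-- Trace norm of a complex matrix: `Tr[√(Aᴴ A)]`. -/
def traceNorm (A : Matrix ι ι ℂ) : ℝ :=
  ((psdSqrt (Matrix.posSemidef_conjTranspose_mul_self A)).trace).re

/-- A quantum state: positive semidefinite with unit trace. -/
def IsState (ρ : Matrix ι ι ℂ) : Prop := ρ.PosSemidef ∧ ρ.trace = 1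

/-- Positive semidefinite square root (junk value `0` off the PSD matrices). -/
def matSqrt (A : Matrix ι ι ℂ) : Matrix ι ι ℂ :=
  if h : A.PosSemidef then psdSqrt h else 0

/-- Real power of a Hermitian matrix, applying `x ↦ x ^ s` to positive
eigenvalues and `x ↦ 0` to the remaining ones (so `A ^ 0` is the support
projection); junk value `0` off the Hermitian matrices. -/
def matRpow (A : Matrix ι ι ℂ) (s : ℝ) : Matrix ι ι ℂ :=
  if h : A.IsHermitian then
    (h.eigenvectorUnitary : Matrix ι ι ℂ) *
      Matrix.diagonal (fun i =>
        ((if 0 < h.eigenvalues i then (h.eigenvalues i) ^ s else 0 : ℝ) : ℂ)) *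
      (star (h.eigenvectorUnitary : Matrix ι ι ℂ))
  else 0

/-- Fidelity `F(ρ,σ) = ‖√ρ √σ‖₁²`. -/
def Fid (ρ σ : Matrix ι ι ℂ) : ℝ := (traceNorm (matSqrt ρ * matSqrt σ)) ^ 2

/-- Holevo fidelity `F_H(ρ,σ) = (Tr[√ρ √σ])²`. -/
def FidH (ρ σ : Matrix ι ι ℂ) : ℝ := (((matSqrt ρ * matSqrt σ).trace).re) ^ 2

/-- `Q_s(A‖B) = Tr[A^s B^{1-s}]`. -/
def Qs (s : ℝ) (A B : Matrix ι ι ℂ) : ℝ := ((matRpow A s * matRpow B (1 - s)).trace).re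

/-- `Q_min(A‖B) = min_{s ∈ [0,1]} Q_s(A‖B)`. -/
def Qmin (A B : Matrix ι ι ℂ) : ℝ :=
  sInf { x : ℝ | ∃ s ∈ Set.Icc (0 : ℝ) 1, x = Qs s A B }

/-- Bures distance. -/
def dB (ρ σ : Matrix ι ι ℂ) : ℝ := Real.sqrt (2 * (1 - Real.sqrt (Fid ρ σ)))

/-- Quantum Hellinger distance. -/
def dH (ρ σ : Matrix ι ι ℂ) : ℝ := Real.sqrt (2 * (1 - Real.sqrt (FidH ρ σ)))

/-- `n`-fold Kronecker (tensor) power of a matrix. -/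
def tensorPow {d : ℕ} (A : Matrix (Fin d) (Fin d) ℂ) (n : ℕ) :
    Matrix (Fin n → Fin d) (Fin n → Fin d) ℂ :=
  Matrix.of fun i j => ∏ k, A (i k) (j k)

/-- Optimal error probability of symmetric binary quantum hypothesis testing
with `n` copies. -/
def pErr {d : ℕ} (p : ℝ) (ρ : Matrix (Fin d) (Fin d) ℂ) (q : ℝ)
    (σ : Matrix (Fin d) (Fin d) ℂ) (n : ℕ) : ℝ :=
  sInf { x : ℝ | ∃ Λ : Matrix (Fin n → Fin d) (Fin n → Fin d) ℂ,
    Λ.PosSemidef ∧ (1 - Λ).PosSemidef ∧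
    x = p * (((1 - Λ) * tensorPow ρ n).trace).re + q * ((Λ * tensorPow σ n).trace).re }

/-- Sample complexity of symmetric binary quantum hypothesis testing. -/
def sampleComplexity {d : ℕ} (p : ℝ) (ρ : Matrix (Fin d) (Fin d) ℂ) (q : ℝ)
    (σ : Matrix (Fin d) (Fin d) ℂ) (ε : ℝ) : ℕ :=
  sInf { n : ℕ | 1 ≤ n ∧ pErr p ρ q σ n ≤ ε }

/-- Optimal type II error `β_ε(ρ‖σ)` of asymmetric hypothesis testing. -/
def betaErr (ε : ℝ) (ρ σ : Matrix ι ι ℂ) : ℝ :=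
  sInf { x : ℝ | ∃ Λ : Matrix ι ι ℂ, Λ.PosSemidef ∧ (1 - Λ).PosSemidef ∧
    (((1 - Λ) * ρ).trace).re ≤ ε ∧ x = ((Λ * σ).trace).re }

/-- Sample complexity of asymmetric binary quantum hypothesis testing. -/
def sampleComplexityAsym {d : ℕ} (ρ σ : Matrix (Fin d) (Fin d) ℂ) (ε δ : ℝ) : ℕ :=
  sInf { n : ℕ | 1 ≤ n ∧ betaErr ε (tensorPow ρ n) (tensorPow σ n) ≤ δ }

/-- Petz–Rényi divergence `D_α(ρ‖σ)`. -/
def petzRenyi (α : ℝ) (ρ σ : Matrix ι ι ℂ) : ℝ :=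
  (1 / (α - 1)) * Real.log (((matRpow ρ α * matRpow σ (1 - α)).trace).re)

/-- Sandwiched Rényi divergence `D̃_α(ρ‖σ)`. -/
def sandwichedRenyi (α : ℝ) (ρ σ : Matrix ι ι ℂ) : ℝ :=
  (1 / (α - 1)) * Real.log
    (((matRpow (matRpow σ ((1 - α) / (2 * α)) * ρ * matRpow σ ((1 - α) / (2 * α))) α).trace).re)


section PGMAux

open Matrix

set_option linter.unusedSectionVars false

lemma star_mul_self_eigU {A : Matrix ι ι ℂ} (hA : A.IsHermitian) :
    (star (hA.eigenvectorUnitary : Matrix ι ι ℂ)) * (hA.eigenvectorUnitary : Matrix ι ι ℂ) = 1 :=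
  Matrix.mem_unitaryGroup_iff'.mp (hA.eigenvectorUnitary).2

lemma self_mul_star_eigU {A : Matrix ι ι ℂ} (hA : A.IsHermitian) :
    (hA.eigenvectorUnitary : Matrix ι ι ℂ) * (star (hA.eigenvectorUnitary : Matrix ι ι ℂ)) = 1 :=
  Matrix.mem_unitaryGroup_iff.mp (hA.eigenvectorUnitary).2

lemma matRpow_eq {A : Matrix ι ι ℂ} (hA : A.IsHermitian) (s : ℝ) :
    matRpow A s = (hA.eigenvectorUnitary : Matrix ι ι ℂ) *
      Matrix.diagonal (fun i =>
        ((if 0 < hA.eigenvalues i then (hA.eigenvalues i) ^ s else 0 : ℝ) : ℂ)) *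
      (star (hA.eigenvectorUnitary : Matrix ι ι ℂ)) := by
  rw [matRpow, dif_pos hA]

lemma matRpow_isHermitian (A : Matrix ι ι ℂ) (s : ℝ) : (matRpow A s).IsHermitian := by
  by_cases hA : A.IsHermitian
  · rw [matRpow_eq hA, Matrix.star_eq_conjTranspose]
    refine Matrix.isHermitian_mul_mul_conjTranspose _ ?_
    rw [Matrix.IsHermitian, Matrix.diagonal_conjTranspose]
    refine congrArg Matrix.diagonal ?_
    funext i
    simp
  · rw [matRpow, dif_neg hA]
    exact Matrix.isHermitian_zero

lemma matRpow_mul {A : Matrix ι ι ℂ} (hA : A.PosDef) (s t : ℝ) :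
    matRpow A s * matRpow A t = matRpow A (s + t) := by
  rw [matRpow_eq hA.1, matRpow_eq hA.1, matRpow_eq hA.1]
  set U : Matrix ι ι ℂ := (hA.1.eigenvectorUnitary : Matrix ι ι ℂ) with hU
  have collapse : ∀ D₁ D₂ : Matrix ι ι ℂ,
      (U * D₁ * star U) * (U * D₂ * star U) = U * (D₁ * (star U * U) * D₂) * star U := by
    intro D₁ D₂; simp only [Matrix.mul_assoc]
  rw [collapse, star_mul_self_eigU hA.1, Matrix.mul_one, Matrix.diagonal_mul_diagonal]
  have hfun : (fun i =>
      ((if 0 < hA.1.eigenvalues i then (hA.1.eigenvalues i) ^ s else 0 : ℝ) : ℂ) *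
      ((if 0 < hA.1.eigenvalues i then (hA.1.eigenvalues i) ^ t else 0 : ℝ) : ℂ)) =
      (fun i =>
      ((if 0 < hA.1.eigenvalues i then (hA.1.eigenvalues i) ^ (s + t) else 0 : ℝ) : ℂ)) := by
    funext i
    have h := hA.eigenvalues_pos i
    rw [if_pos h, if_pos h, if_pos h, ← Complex.ofReal_mul, ← Real.rpow_add h]
  rw [hfun]

lemma matRpow_one {A : Matrix ι ι ℂ} (hA : A.PosDef) : matRpow A 1 = A := by
  rw [matRpow_eq hA.1]
  conv_rhs => rw [hA.1.spectral_theorem]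
  have hfun : (fun i =>
      ((if 0 < hA.1.eigenvalues i then (hA.1.eigenvalues i) ^ (1:ℝ) else 0 : ℝ) : ℂ)) =
      (RCLike.ofReal ∘ hA.1.eigenvalues) := by
    funext i
    rw [if_pos (hA.eigenvalues_pos i), Real.rpow_one]
    rfl
  rw [hfun]
  rfl

lemma matRpow_zero {A : Matrix ι ι ℂ} (hA : A.PosDef) : matRpow A 0 = 1 := by
  rw [matRpow_eq hA.1]
  have hfun : (Matrix.diagonal (fun i =>
      ((if 0 < hA.1.eigenvalues i then (hA.1.eigenvalues i) ^ (0:ℝ) else 0 : ℝ) : ℂ))) = 1 := by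
    rw [← Matrix.diagonal_one]
    refine congrArg Matrix.diagonal ?_
    funext i
    rw [if_pos (hA.eigenvalues_pos i), Real.rpow_zero]
    norm_num
  rw [hfun, Matrix.mul_one, self_mul_star_eigU hA.1]

lemma re_trace_conjTranspose_mul_self_nonneg (M : Matrix ι ι ℂ) :
    0 ≤ ((Mᴴ * M).trace).re := by
  simp only [Matrix.trace, Matrix.diag, Matrix.mul_apply, Matrix.conjTranspose_apply,
    Complex.re_sum]
  refine Finset.sum_nonneg fun i _ => Finset.sum_nonneg fun j _ => ?_
  simp only [Complex.mul_re, RCLike.star_def, Complex.conj_re, Complex.conj_im]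
  nlinarith [sq_nonneg (M j i).re, sq_nonneg (M j i).im]

lemma psdSqrt_eq_of_sq_eq' {P M : Matrix ι ι ℂ} (hM : M.PosSemidef) (hP : P.PosSemidef)
    (h : M ^ 2 = P) : M = psdSqrt hP := by
  open scoped MatrixOrder in
  have hP0 : (0 : Matrix ι ι ℂ) ≤ P := Matrix.nonneg_iff_posSemidef.mpr hP
  open scoped MatrixOrder in
  have e1 : psdSqrt hP = CFC.sqrt P := by
    rw [CFC.sqrt_eq_real_sqrt P hP0, cfcₙ_eq_cfc, hP.1.cfc_eq]
    rfl
  open scoped MatrixOrder in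
  exact e1 ▸ (CFC.sqrt_unique (by rw [← pow_two, h]) (Matrix.nonneg_iff_posSemidef.mpr hM)).symm

lemma trace_conj_eigU {A : Matrix ι ι ℂ} (hA : A.IsHermitian) (M : Matrix ι ι ℂ) :
    ((hA.eigenvectorUnitary : Matrix ι ι ℂ) * M *
      (star (hA.eigenvectorUnitary : Matrix ι ι ℂ))).trace = M.trace := by
  rw [Matrix.trace_mul_comm, ← Matrix.mul_assoc, star_mul_self_eigU hA, Matrix.one_mul]

lemma exists_sign_of_isHermitian (Δ : Matrix ι ι ℂ) (hΔ : Δ.IsHermitian) :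
    ∃ W : Matrix ι ι ℂ, W.IsHermitian ∧ W * W = 1 ∧ ((Δ * W).trace).re = traceNorm Δ := by
  set U : Matrix ι ι ℂ := (hΔ.eigenvectorUnitary : Matrix ι ι ℂ) with hU
  set e := hΔ.eigenvalues with he
  have collapse : ∀ D₁ D₂ : Matrix ι ι ℂ,
      (U * D₁ * star U) * (U * D₂ * star U) = U * (D₁ * D₂) * star U := by
    intro D₁ D₂
    calc (U * D₁ * star U) * (U * D₂ * star U)
        = U * (D₁ * (star U * U) * D₂) * star U := by simp only [Matrix.mul_assoc]
      _ = U * (D₁ * D₂) * star U := by rw [star_mul_self_eigU hΔ, Matrix.mul_one]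
  refine ⟨U * Matrix.diagonal (fun i => ((if e i < 0 then (-1:ℝ) else 1 : ℝ) : ℂ)) * star U,
    ?_, ?_, ?_⟩
  · rw [Matrix.star_eq_conjTranspose]
    refine Matrix.isHermitian_mul_mul_conjTranspose _ ?_
    rw [Matrix.IsHermitian, Matrix.diagonal_conjTranspose]
    refine congrArg Matrix.diagonal ?_
    funext i
    simp
  · rw [collapse, Matrix.diagonal_mul_diagonal]
    have hfun : (fun i => ((if e i < 0 then (-1:ℝ) else 1 : ℝ) : ℂ) *
        ((if e i < 0 then (-1:ℝ) else 1 : ℝ) : ℂ)) = fun _ => (1:ℂ) := by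
      funext i
      by_cases h : e i < 0 <;> simp [h]
    rw [hfun, Matrix.diagonal_one, Matrix.mul_one, self_mul_star_eigU hΔ]
  · have hΔeq : Δ = U * Matrix.diagonal (RCLike.ofReal ∘ e) * star U := hΔ.spectral_theorem
    have habs : psdSqrt (Matrix.posSemidef_conjTranspose_mul_self Δ)
        = U * Matrix.diagonal (fun i => ((|e i| : ℝ) : ℂ)) * star U := by
      refine ((psdSqrt_eq_of_sq_eq' ?_ _ ?_)).symm
      · rw [Matrix.star_eq_conjTranspose]
        refine Matrix.PosSemidef.mul_mul_conjTranspose_same ?_ U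
        refine Matrix.posSemidef_diagonal_iff.mpr fun i => ?_
        rw [RCLike.nonneg_iff]
        constructor <;> simp [abs_nonneg]
      · rw [pow_two, collapse, Matrix.diagonal_mul_diagonal]
        conv_rhs => rw [hΔ.eq]
        conv_rhs => rw [hΔeq]
        rw [collapse, Matrix.diagonal_mul_diagonal]
        refine congrArg (fun D => U * D * star U) (congrArg Matrix.diagonal ?_)
        funext i
        simp only [Function.comp_apply]
        rw [← Complex.ofReal_mul, ← abs_mul, abs_mul_self]
        norm_num
    rw [traceNorm, habs, trace_conj_eigU hΔ]
    conv_lhs => rw [hΔeq]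
    rw [collapse, Matrix.diagonal_mul_diagonal, trace_conj_eigU hΔ]
    rw [Matrix.trace_diagonal, Matrix.trace_diagonal]
    rw [Complex.re_sum, Complex.re_sum]
    refine Finset.sum_congr rfl fun i _ => ?_
    by_cases h : e i < 0
    · simp [h, abs_of_neg h]
    · simp [h, abs_of_nonneg (not_lt.mp h)]

lemma re_trace_sq_le_of_herm {W H T : Matrix ι ι ℂ} (hW : W.IsHermitian)
    (hH : H.IsHermitian) (hW2 : W * W = 1) (hHH : H * H = T) :
    ((((W * H) * (W * H)).trace)).re ≤ ((T.trace)).re := by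
  set M : Matrix ι ι ℂ := W * H with hMdef
  have hMH : Mᴴ = H * W := by
    rw [hMdef, Matrix.conjTranspose_mul, hH.eq, hW.eq]
  have hMMH : (M * Mᴴ).trace = T.trace := by
    have : M * Mᴴ = W * T * W := by
      rw [hMH, hMdef]
      calc W * H * (H * W) = W * (H * H) * W := by simp only [Matrix.mul_assoc]
        _ = W * T * W := by rw [hHH]
    rw [this, Matrix.mul_assoc, Matrix.trace_mul_comm, Matrix.mul_assoc, hW2,
      Matrix.mul_one]
  have hpos := re_trace_conjTranspose_mul_self_nonneg (M - Mᴴ)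
  rw [Matrix.conjTranspose_sub, Matrix.conjTranspose_conjTranspose] at hpos
  have hexp : (Mᴴ - M) * (M - Mᴴ) = Mᴴ * M - Mᴴ * Mᴴ - M * M + M * Mᴴ := by noncomm_ring
  rw [hexp, Matrix.trace_add, Matrix.trace_sub, Matrix.trace_sub] at hpos
  have e1 : (Mᴴ * M).trace = (M * Mᴴ).trace := Matrix.trace_mul_comm _ _
  have e2 : ((Mᴴ * Mᴴ).trace).re = ((M * M).trace).re := by
    rw [← Matrix.conjTranspose_mul, Matrix.trace_conjTranspose]
    simp [RCLike.star_def]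
  rw [e1] at hpos
  simp only [Complex.add_re, Complex.sub_re] at hpos
  rw [e2, hMMH] at hpos
  linarith

end PGMAux

/-- **Pretty-good measurement error relation**: for positive semidefinite
`A, B` with `A + B` positive definite,
`Tr[A (A+B)^{-1/2} B (A+B)^{-1/2}] ≤ (1/2) Tr[A+B] − (1/2) ‖A − B‖₁`. -/
theorem pretty_good_measurement_bound {ι : Type*} [Fintype ι] [DecidableEq ι]
    (A B : Matrix ι ι ℂ) (hA : A.PosSemidef) (hB : B.PosSemidef)
    (hAB : (A + B).PosDef) :
    ((A * matRpow (A + B) (-(1 / 2)) * B * matRpow (A + B) (-(1 / 2))).trace).re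
      ≤ (1 / 2) * (((A + B).trace).re) - (1 / 2) * traceNorm (A - B) := by
  set T : Matrix ι ι ℂ := A + B with hTdef
  set Δ : Matrix ι ι ℂ := A - B with hΔdef
  have hΔ : Δ.IsHermitian := hA.1.sub hB.1
  set S : Matrix ι ι ℂ := matRpow T (-(1 / 2)) with hSdef
  set Q : Matrix ι ι ℂ := matRpow T (-(1 / 4)) with hQdef
  set R : Matrix ι ι ℂ := matRpow T (1 / 4) with hRdef
  set H : Matrix ι ι ℂ := matRpow T (1 / 2) with hHdef
  have hQQ : Q * Q = S := by
    rw [hQdef, hSdef, matRpow_mul hAB, show (-(1/4) + -(1/4) : ℝ) = -(1/2) by norm_num]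
  have hRQ : R * Q = 1 := by
    rw [hRdef, hQdef, matRpow_mul hAB, show ((1/4) + -(1/4) : ℝ) = 0 by norm_num,
      matRpow_zero hAB]
  have hQR : Q * R = 1 := by
    rw [hRdef, hQdef, matRpow_mul hAB, show (-(1/4) + (1/4) : ℝ) = 0 by norm_num,
      matRpow_zero hAB]
  have hRR : R * R = H := by
    rw [hRdef, hHdef, matRpow_mul hAB, show ((1/4) + (1/4) : ℝ) = (1/2) by norm_num]
  have hHH : H * H = T := by
    rw [hHdef, matRpow_mul hAB, show ((1/2) + (1/2) : ℝ) = 1 by norm_num, matRpow_one hAB]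
  have hSH : S * H = 1 := by
    rw [hSdef, hHdef, matRpow_mul hAB, show (-(1/2) + (1/2) : ℝ) = 0 by norm_num,
      matRpow_zero hAB]
  have hTS : T * S = H := by
    conv_lhs => rw [← matRpow_one hAB]
    rw [hSdef, matRpow_mul hAB, show ((1:ℝ) + -(1/2) : ℝ) = 1/2 by norm_num, hHdef]
  have hSTS : S * (T * S) = 1 := by rw [hTS, hSH]
  have hQher : Q.IsHermitian := matRpow_isHermitian T _
  have hRher : R.IsHermitian := matRpow_isHermitian T _
  have hHher : H.IsHermitian := matRpow_isHermitian T _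
  -- sign matrix
  obtain ⟨W, hW, hW2, hWtr⟩ := exists_sign_of_isHermitian Δ hΔ
  set Z : Matrix ι ι ℂ := Q * Δ * Q with hZdef
  set G : Matrix ι ι ℂ := R * W * R with hGdef
  have hZ : Z.IsHermitian := by
    have := Matrix.isHermitian_mul_mul_conjTranspose Q hΔ
    rwa [hQher.eq] at this
  have hG : G.IsHermitian := by
    have := Matrix.isHermitian_mul_mul_conjTranspose R hW
    rwa [hRher.eq] at this
  -- step 1: 4 Tr[ASBS] = Tr T - Tr[ΔSΔS]
  have hTSTS : T * S * T * S = T := by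
    calc T * S * T * S = T * (S * (T * S)) := by simp only [Matrix.mul_assoc]
      _ = T := by rw [hSTS, Matrix.mul_one]
  have hΔSTS : Δ * S * T * S = Δ := by
    calc Δ * S * T * S = Δ * (S * (T * S)) := by simp only [Matrix.mul_assoc]
      _ = Δ := by rw [hSTS, Matrix.mul_one]
  have trTSΔS : (T * S * Δ * S).trace = Δ.trace := by
    have h1 : T * S * Δ * S = (T * S) * (Δ * S) := by simp only [Matrix.mul_assoc]
    have h2 : (Δ * S) * (T * S) = Δ := by
      calc (Δ * S) * (T * S) = Δ * (S * (T * S)) := by simp only [Matrix.mul_assoc]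
        _ = Δ := by rw [hSTS, Matrix.mul_one]
    rw [h1, Matrix.trace_mul_comm, h2]
  have hm : A * S * B * S + A * S * B * S + A * S * B * S + A * S * B * S
      = T * S * T * S - T * S * Δ * S + Δ * S * T * S - Δ * S * Δ * S := by
    rw [hTdef, hΔdef]
    noncomm_ring
  have h4 : (A * S * B * S).trace + (A * S * B * S).trace + (A * S * B * S).trace
      + (A * S * B * S).trace = T.trace - (Δ * S * Δ * S).trace := by
    have := congrArg Matrix.trace hm
    rw [Matrix.trace_add, Matrix.trace_add, Matrix.trace_add, Matrix.trace_sub,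
      Matrix.trace_add, Matrix.trace_sub] at this
    rw [this, hTSTS, hΔSTS, trTSΔS]
    ring
  -- step 2: Tr[ZZ] = Tr[ΔSΔS]
  have trZZ : (Z * Z).trace = (Δ * S * Δ * S).trace := by
    have key : Z * Z = Q * (Δ * S * Δ * Q) := by
      rw [hZdef]
      calc (Q * Δ * Q) * (Q * Δ * Q) = Q * Δ * (Q * Q) * (Δ * Q) := by
            simp only [Matrix.mul_assoc]
        _ = Q * (Δ * S * Δ * Q) := by rw [hQQ]; simp only [Matrix.mul_assoc]
    rw [key, Matrix.trace_mul_comm]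
    have : (Δ * S * Δ * Q) * Q = Δ * S * Δ * S := by
      rw [Matrix.mul_assoc (Δ * S * Δ) Q Q, hQQ]
    rw [this]
  -- step 3: Tr[ΔW] = Tr[ZG]
  have hΔrec : Δ = R * Z * R := by
    rw [hZdef]
    calc Δ = (R * Q) * Δ * (Q * R) := by rw [hRQ, hQR, Matrix.one_mul, Matrix.mul_one]
      _ = R * (Q * Δ * Q) * R := by simp only [Matrix.mul_assoc]
  have trΔW : (Δ * W).trace = (Z * G).trace := by
    conv_lhs => rw [hΔrec]
    have h1 : R * Z * R * W = R * (Z * R * W) := by simp only [Matrix.mul_assoc]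
    rw [h1, Matrix.trace_mul_comm]
    have h2 : (Z * R * W) * R = Z * G := by rw [hGdef]; simp only [Matrix.mul_assoc]
    rw [h2]
  -- step 4: 2 Tr[ZG].re ≤ Tr[ZZ].re + Tr[GG].re
  have step4 : 2 * ((Z * G).trace).re ≤ ((Z * Z).trace).re + ((G * G).trace).re := by
    have hpos := re_trace_conjTranspose_mul_self_nonneg (Z - G)
    rw [(hZ.sub hG).eq] at hpos
    have hexp : (Z - G) * (Z - G) = Z * Z - Z * G - G * Z + G * G := by noncomm_ring
    rw [hexp, Matrix.trace_add, Matrix.trace_sub, Matrix.trace_sub,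
      Matrix.trace_mul_comm G Z] at hpos
    simp only [Complex.add_re, Complex.sub_re] at hpos
    linarith
  -- step 5: Tr[GG].re ≤ Tr[T].re
  have step5 : ((G * G).trace).re ≤ (T.trace).re := by
    have trGG : (G * G).trace = ((W * H) * (W * H)).trace := by
      have key : G * G = R * (W * H * W * R) := by
        rw [hGdef]
        calc (R * W * R) * (R * W * R) = R * W * (R * R) * (W * R) := by
              simp only [Matrix.mul_assoc]
          _ = R * (W * H * W * R) := by rw [hRR]; simp only [Matrix.mul_assoc]
      rw [key, Matrix.trace_mul_comm]
      have h2 : (W * H * W * R) * R = (W * H) * (W * H) := by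
        rw [Matrix.mul_assoc (W * H * W) R R, hRR]
        simp only [Matrix.mul_assoc]
      rw [h2]
    rw [trGG]
    exact re_trace_sq_le_of_herm hW hHher hW2 hHH
  -- combine
  have h4re := congrArg Complex.re h4
  simp only [Complex.add_re, Complex.sub_re] at h4re
  have trZZre : ((Z * Z).trace).re = ((Δ * S * Δ * S).trace).re := by rw [trZZ]
  have trΔWre : ((Δ * W).trace).re = ((Z * G).trace).re := by rw [trΔW]
  rw [hWtr] at trΔWre
  linarith

end QHT

end
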